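/- Assume the dual-weighted-residual estimate J* − J_N* ≤ (1/2)·( m(e_y^0, e_p^0) − τ·∑_{k=1}^{K} r_y^k(e_p^k) − τ·∑_{k=1}^{K} r_p^k(e_y^k) + τ·∑_{i=1}^{m} ∑_{k=1}^{K} r̃_{u,i}^k·(e_u^k)_i ) holds, where e_p^0 = e_p^1 and r̃_{u,i}^k are real numbers. Assume moreover the energy bounds m(e_p^1, e_p^1) + τ·∑_{k=1}^{K} a(e_p^k, e_p^k) ≤ (Δ_p*)², m(e_y^K, e_y^K) + τ·∑_{k=1}^{K} a(e_y^k, e_y^k) ≤ (Δ_y*)², and the control bound (τ·∑_{k=1}^{K} ‖e_u^k‖_{ℝ^m}²)^{1/2} ≤ Δ_u, with Δ_p*, Δ_y*, Δ_u ≥ 0. Then J* − J_N* ≤ (1/2)·( (m(e_y^0, e_y^0)^{1/2} + Δ_N^{y,K})·Δ_p* + Δ_N^{p,1}·Δ_y* + (τ·∑_{i=1}^{m} ∑_{k=1}^{K} |r̃_{u,i}^k|²)^{1/2}·Δ_u ), where Δ_N^{y,K} = ((τ/α)·∑_{k=1}^{K} ‖r_y^k‖_{Y'}²)^{1/2} and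 Δ_N^{p,1} = ((τ/α)·∑_{k=1}^{K} ‖r_p^k‖_{Y'}²)^{1/2}. -/

import Mathlib

/-- Cauchy–Schwarz for finite sums of reals, square-root form. -/
private lemma sum_cs {ι : Type*} (s : Finset ι) (f g : ι → ℝ) :
    ∑ i ∈ s, f i * g i ≤
      Real.sqrt (∑ i ∈ s, f i ^ 2) * Real.sqrt (∑ i ∈ s, g i ^ 2) := by
  have h := Finset.sum_mul_sq_le_sq_mul_sq s f g
  calc ∑ i ∈ s, f i * g i ≤ |∑ i ∈ s, f i * g i| := le_abs_self _
    _ = Real.sqrt ((∑ i ∈ s, f i * g i) ^ 2) := (Real.sqrt_sq_eq_abs _).symm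
    _ ≤ Real.sqrt ((∑ i ∈ s, f i ^ 2) * ∑ i ∈ s, g i ^ 2) := Real.sqrt_le_sqrt h
    _ = _ := Real.sqrt_mul (Finset.sum_nonneg fun i _ => sq_nonneg _) _

/-- Cauchy–Schwarz for a nonnegative symmetric bilinear form. -/
private lemma bilin_cs {Y : Type*} [AddCommGroup Y] [Module ℝ Y]
    (mm : Y →ₗ[ℝ] Y →ₗ[ℝ] ℝ) (hsymm : ∀ v w, mm v w = mm w v)
    (hpos : ∀ v, 0 ≤ mm v v) (v w : Y) :
    mm v w ≤ Real.sqrt (mm v v) * Real.sqrt (mm w w) := by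
  have key : (mm v w) ^ 2 ≤ mm v v * mm w w := by
    have h : ∀ t : ℝ, 0 ≤ mm w w * (t * t) + 2 * mm v w * t + mm v v := by
      intro t
      have h0 := hpos (t • w + v)
      have e : mm (t • w + v) (t • w + v)
          = mm w w * t ^ 2 + 2 * mm v w * t + mm v v := by
        simp only [map_add, map_smul, LinearMap.add_apply, LinearMap.smul_apply,
          smul_eq_mul, hsymm w v]
        ring
      linarith [e ▸ h0]
    have hd := discrim_le_zero h
    rw [discrim] at hd
    nlinarith
  calc mm v w ≤ |mm v w| := le_abs_self _
    _ = Real.sqrt ((mm v w) ^ 2) := (Real.sqrt_sq_eq_abs _).symm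
    _ ≤ Real.sqrt (mm v v * mm w w) := Real.sqrt_le_sqrt key
    _ = _ := Real.sqrt_mul (hpos v) _

/-- Dual-weighted residual bound for one residual/error pairing. -/
private lemma residual_bound {Y : Type*} [NormedAddCommGroup Y] [NormedSpace ℝ Y]
    (s : Finset ℕ) {τ α : ℝ} (hτ : 0 < τ) (hα : 0 < α)
    (r : ℕ → Y →L[ℝ] ℝ) (e : ℕ → Y) {D : ℝ} (hD : 0 ≤ D)
    (hE : τ * ∑ k ∈ s, α * ‖e k‖ ^ 2 ≤ D ^ 2) :
    -(τ * ∑ k ∈ s, r k (e k)) ≤ Real.sqrt ((τ / α) * ∑ k ∈ s, ‖r k‖ ^ 2) * D := by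
  have hc : Real.sqrt (τ / α) * Real.sqrt (τ * α) = τ := by
    rw [← Real.sqrt_mul (by positivity), show τ / α * (τ * α) = τ ^ 2 by
      field_simp]
    exact Real.sqrt_sq hτ.le
  have step1 : -(τ * ∑ k ∈ s, r k (e k)) ≤
      ∑ k ∈ s, (Real.sqrt (τ / α) * ‖r k‖) * (Real.sqrt (τ * α) * ‖e k‖) := by
    have e1 : -(τ * ∑ k ∈ s, r k (e k)) = ∑ k ∈ s, τ * -(r k (e k)) := by
      simp [Finset.mul_sum, mul_neg]
    rw [e1]
    refine Finset.sum_le_sum fun k _ => ?_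
    have h2 : -(r k (e k)) ≤ ‖r k‖ * ‖e k‖ := by
      have := (r k).le_opNorm (e k)
      rw [Real.norm_eq_abs] at this
      linarith [neg_le_abs (r k (e k))]
    calc τ * -(r k (e k)) ≤ τ * (‖r k‖ * ‖e k‖) :=
          mul_le_mul_of_nonneg_left h2 hτ.le
      _ = (Real.sqrt (τ / α) * ‖r k‖) * (Real.sqrt (τ * α) * ‖e k‖) := by
          rw [mul_mul_mul_comm, hc]
  have step2 := sum_cs s (fun k => Real.sqrt (τ / α) * ‖r k‖)
    (fun k => Real.sqrt (τ * α) * ‖e k‖)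
  have eA : ∑ k ∈ s, (Real.sqrt (τ / α) * ‖r k‖) ^ 2
      = (τ / α) * ∑ k ∈ s, ‖r k‖ ^ 2 := by
    rw [Finset.mul_sum]
    refine Finset.sum_congr rfl fun k _ => ?_
    rw [mul_pow, Real.sq_sqrt (by positivity)]
  have eB : ∑ k ∈ s, (Real.sqrt (τ * α) * ‖e k‖) ^ 2
      = τ * ∑ k ∈ s, α * ‖e k‖ ^ 2 := by
    rw [Finset.mul_sum]
    refine Finset.sum_congr rfl fun k _ => ?_
    rw [mul_pow, Real.sq_sqrt (by positivity)]
    ring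
  rw [eA, eB] at step2
  refine step1.trans (step2.trans ?_)
  refine mul_le_mul_of_nonneg_left ?_ (Real.sqrt_nonneg _)
  calc Real.sqrt (τ * ∑ k ∈ s, α * ‖e k‖ ^ 2) ≤ Real.sqrt (D ^ 2) :=
        Real.sqrt_le_sqrt hE
    _ = D := Real.sqrt_sq hD

/-- A posteriori cost functional error bound in the control-constrained case:
`J* − J_N* ≤ Δ_N^{J,*,c}`, derived from the dual-weighted-residual estimate and
the energy bounds on the state, adjoint and control errors. -/
theorem cost_functional_error_bound_constrained
    {Y : Type*} [NormedAddCommGroup Y] [NormedSpace ℝ Y]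
    {md K : ℕ} (hK : 1 ≤ K) {τ α : ℝ} (hτ : 0 < τ) (hα : 0 < α)
    (a mm : Y →ₗ[ℝ] Y →ₗ[ℝ] ℝ)
    (ha : ∀ v : Y, α * ‖v‖ ^ 2 ≤ a v v)
    (hmsymm : ∀ v w : Y, mm v w = mm w v)
    (hmpos : ∀ v : Y, 0 ≤ mm v v)
    (ey ep : ℕ → Y) (eu : ℕ → Fin md → ℝ)
    (ry rp : ℕ → Y →L[ℝ] ℝ) (rtu : Fin md → ℕ → ℝ)
    (Jstar JNstar Δp Δy Δu : ℝ)
    (hΔp : 0 ≤ Δp) (hΔy : 0 ≤ Δy) (hΔu : 0 ≤ Δu)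
    (hdwr : Jstar - JNstar ≤ (1 / 2) * (mm (ey 0) (ep 1)
      - τ * ∑ k ∈ Finset.Icc 1 K, ry k (ep k)
      - τ * ∑ k ∈ Finset.Icc 1 K, rp k (ey k)
      + τ * ∑ i, ∑ k ∈ Finset.Icc 1 K, rtu i k * eu k i))
    (hEp : mm (ep 1) (ep 1) + τ * ∑ k ∈ Finset.Icc 1 K, a (ep k) (ep k) ≤ Δp ^ 2)
    (hEy : mm (ey K) (ey K) + τ * ∑ k ∈ Finset.Icc 1 K, a (ey k) (ey k) ≤ Δy ^ 2)
    (hEu : Real.sqrt (τ * ∑ k ∈ Finset.Icc 1 K, ∑ i, eu k i ^ 2) ≤ Δu) :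
    Jstar - JNstar ≤ (1 / 2) *
      ((Real.sqrt (mm (ey 0) (ey 0))
          + Real.sqrt ((τ / α) * ∑ k ∈ Finset.Icc 1 K, ‖ry k‖ ^ 2)) * Δp
        + Real.sqrt ((τ / α) * ∑ k ∈ Finset.Icc 1 K, ‖rp k‖ ^ 2) * Δy
        + Real.sqrt (τ * ∑ i, ∑ k ∈ Finset.Icc 1 K, (rtu i k) ^ 2) * Δu) := by
  set s := Finset.Icc 1 K with hs
  -- nonnegativity of a on the diagonal
  have hapos : ∀ v : Y, (0:ℝ) ≤ a v v := fun v => le_trans (by positivity) (ha v)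
  -- energy bounds in terms of α‖·‖²
  have hEp' : τ * ∑ k ∈ s, α * ‖ep k‖ ^ 2 ≤ Δp ^ 2 := by
    have h1 : ∑ k ∈ s, α * ‖ep k‖ ^ 2 ≤ ∑ k ∈ s, a (ep k) (ep k) :=
      Finset.sum_le_sum fun k _ => ha (ep k)
    nlinarith [hmpos (ep 1), mul_le_mul_of_nonneg_left h1 hτ.le]
  have hEy' : τ * ∑ k ∈ s, α * ‖ey k‖ ^ 2 ≤ Δy ^ 2 := by
    have h1 : ∑ k ∈ s, α * ‖ey k‖ ^ 2 ≤ ∑ k ∈ s, a (ey k) (ey k) :=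
      Finset.sum_le_sum fun k _ => ha (ey k)
    nlinarith [hmpos (ey K), mul_le_mul_of_nonneg_left h1 hτ.le]
  -- Bound 1: mm (ey 0) (ep 1) ≤ √(mm ey0 ey0) * Δp
  have hB1 : mm (ey 0) (ep 1) ≤ Real.sqrt (mm (ey 0) (ey 0)) * Δp := by
    have hmp : mm (ep 1) (ep 1) ≤ Δp ^ 2 := by
      have h0 : 0 ≤ τ * ∑ k ∈ s, a (ep k) (ep k) :=
        mul_nonneg hτ.le (Finset.sum_nonneg fun k _ => hapos _)
      linarith
    calc mm (ey 0) (ep 1)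
        ≤ Real.sqrt (mm (ey 0) (ey 0)) * Real.sqrt (mm (ep 1) (ep 1)) :=
          bilin_cs mm hmsymm hmpos _ _
      _ ≤ Real.sqrt (mm (ey 0) (ey 0)) * Δp := by
          refine mul_le_mul_of_nonneg_left ?_ (Real.sqrt_nonneg _)
          calc Real.sqrt (mm (ep 1) (ep 1)) ≤ Real.sqrt (Δp ^ 2) :=
                Real.sqrt_le_sqrt hmp
            _ = Δp := Real.sqrt_sq hΔp
  -- Bound 2 and 3: residual bounds
  have hB2 := residual_bound s hτ hα ry ep hΔp hEp'
  have hB3 := residual_bound s hτ hα rp ey hΔy hEy'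
  -- Bound 4: control term
  have hB4 : τ * ∑ i, ∑ k ∈ s, rtu i k * eu k i ≤
      Real.sqrt (τ * ∑ i, ∑ k ∈ s, (rtu i k) ^ 2) * Δu := by
    set P := (Finset.univ : Finset (Fin md)) ×ˢ s with hP
    have e4 : τ * ∑ i, ∑ k ∈ s, rtu i k * eu k i
        = ∑ p ∈ P, (Real.sqrt τ * rtu p.1 p.2) * (Real.sqrt τ * eu p.2 p.1) := by
      rw [Finset.sum_product, Finset.mul_sum]
      refine Finset.sum_congr rfl fun i _ => ?_
      rw [Finset.mul_sum]
      refine Finset.sum_congr rfl fun k _ => ?_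
      rw [mul_mul_mul_comm, Real.mul_self_sqrt hτ.le]
    have eA : ∑ p ∈ P, (Real.sqrt τ * rtu p.1 p.2) ^ 2
        = τ * ∑ i, ∑ k ∈ s, (rtu i k) ^ 2 := by
      rw [Finset.sum_product, Finset.mul_sum]
      refine Finset.sum_congr rfl fun i _ => ?_
      rw [Finset.mul_sum]
      exact Finset.sum_congr rfl fun k _ => by
        rw [mul_pow, Real.sq_sqrt hτ.le]
    have eB : ∑ p ∈ P, (Real.sqrt τ * eu p.2 p.1) ^ 2
        = τ * ∑ k ∈ s, ∑ i, eu k i ^ 2 := by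
      rw [Finset.sum_product]
      rw [show (∑ i : Fin md, ∑ k ∈ s, (Real.sqrt τ * eu k i) ^ 2)
          = ∑ k ∈ s, ∑ i : Fin md, (Real.sqrt τ * eu k i) ^ 2 from
          Finset.sum_comm]
      rw [Finset.mul_sum]
      refine Finset.sum_congr rfl fun k _ => ?_
      rw [Finset.mul_sum]
      exact Finset.sum_congr rfl fun i _ => by
        rw [mul_pow, Real.sq_sqrt hτ.le]
    have step := sum_cs P (fun p => Real.sqrt τ * rtu p.1 p.2)
      (fun p => Real.sqrt τ * eu p.2 p.1)
    rw [eA, eB] at step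
    rw [e4]
    refine step.trans (mul_le_mul_of_nonneg_left hEu (Real.sqrt_nonneg _))
  linarith
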